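/- arXiv:1306.5503 — 2 statements merged into one kernel-verified Lean document; each statement's English description precedes it below -/
import Mathlib

section
/- Let (V, I) be an interval system with D(V, I) of finite length. Then D(V, I) is balanced: for every join-irreducible j and meet-irreducible m with j ≰ m, one has j ∨ m = m* if and only if j ∧ m = j*, where j* is the lower cover of j and m* is the upper cover of m. -/
variable {V : Type*}

/-- `Q` is a closure system on `V`: it contains `V` and is closed under
intersections of nonempty subfamilies. -/
def IsClosureSystem (Q : Set (Set V)) : Prop :=
  Set.univ ∈ Q ∧ ∀ F ⊆ Q, F.Nonempty → ⋂₀ F ∈ Q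

/-- Algebraic: the union of any nonempty chain of closed sets is closed. -/
def IsAlgebraicSystem (Q : Set (Set V)) : Prop :=
  ∀ C ⊆ Q, C.Nonempty → IsChain (· ⊆ ·) C → ⋃₀ C ∈ Q

/-- Condition (I₀): the empty set and all singletons are closed. -/
def CondI0 (Q : Set (Set V)) : Prop := ∅ ∈ Q ∧ ∀ x : V, {x} ∈ Q

/-- Condition (I₁): the union of two intersecting members is a member. -/
def CondI1 (Q : Set (Set V)) : Prop :=
  ∀ A ∈ Q, ∀ B ∈ Q, (A ∩ B).Nonempty → A ∪ B ∈ Q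

/-- Condition (I₂): differences of properly overlapping members are members. -/
def CondI2 (Q : Set (Set V)) : Prop :=
  ∀ A ∈ Q, ∀ B ∈ Q, (A ∩ B).Nonempty → ¬ A ⊆ B → ¬ B ⊆ A → A \ B ∈ Q ∧ B \ A ∈ Q

/-- An interval system: an algebraic closure system satisfying (I₀), (I₁), (I₂). -/
def IsIntervalSystem (Q : Set (Set V)) : Prop :=
  IsClosureSystem Q ∧ IsAlgebraicSystem Q ∧ CondI0 Q ∧ CondI1 Q ∧ CondI2 Q

/-- `A` is a strong set of the closure system `Q`. -/
def IsStrong (Q : Set (Set V)) (A : Set V) : Prop :=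
  A ∈ Q ∧ ∀ B ∈ Q, (A ∩ B).Nonempty → A ⊆ B ∨ B ⊆ A

/-- A decomposition: a partition of `V` (coded as a setoid) all of whose
blocks belong to `Q`.  The refinement order on partitions corresponds to the
order on `Setoid V` (finer below). -/
def IsDecomp (Q : Set (Set V)) (π : Setoid V) : Prop :=
  ∀ x : V, {y | π.r x y} ∈ Q

/-- The lattice `D(V,Q)` of decompositions, as a subtype of `Setoid V`
with the induced (refinement) partial order. -/
abbrev Decomp (Q : Set (Set V)) := {π : Setoid V // IsDecomp Q π}

namespace IntervalAux

variable {I : Set (Set V)}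

lemma inter_mem (hI : IsIntervalSystem I) {A B : Set V} (hA : A ∈ I) (hB : B ∈ I) :
    A ∩ B ∈ I := by
  have h := hI.1.2 {A, B} (by intro X hX; rcases hX with rfl | rfl <;> assumption)
    ⟨A, by simp⟩
  simpa using h

/-- Union of a member `K` with a family of members each meeting `K` is a member. -/
lemma union_mem (hI : IsIntervalSystem I) {K : Set V} (hK : K ∈ I)
    (𝓕 : Set (Set V)) (h𝓕 : ∀ M ∈ 𝓕, M ∈ I) (hmeet : ∀ M ∈ 𝓕, (M ∩ K).Nonempty) :
    K ∪ ⋃₀ 𝓕 ∈ I := by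
  set T : Set (Set V) := {A | A ∈ I ∧ K ⊆ A ∧ A ⊆ K ∪ ⋃₀ 𝓕} with hT
  have hchain : ∀ c ⊆ T, IsChain (fun x1 x2 => x1 ⊆ x2) c → c.Nonempty →
      ∃ ub ∈ T, ∀ s ∈ c, s ⊆ ub := by
    intro c hc hch hne
    refine ⟨⋃₀ c, ⟨hI.2.1 c (fun A hA => (hc hA).1) hne hch, ?_, ?_⟩,
      fun s hs => Set.subset_sUnion_of_mem hs⟩
    · obtain ⟨A, hA⟩ := hne
      exact (hc hA).2.1.trans (Set.subset_sUnion_of_mem hA)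
    · exact Set.sUnion_subset fun A hA => (hc hA).2.2
  obtain ⟨A, hKA, hAmax⟩ := zorn_subset_nonempty T hchain K
    ⟨hK, subset_rfl, Set.subset_union_left⟩
  have : K ∪ ⋃₀ 𝓕 ⊆ A := by
    apply Set.union_subset (hAmax.1.2.1)
    apply Set.sUnion_subset
    intro M hM
    by_contra hMA
    have hAM : A ∪ M ∈ T := by
      refine ⟨hI.2.2.2.1 A hAmax.1.1 M (h𝓕 M hM) ?_, hKA.trans Set.subset_union_left,
        Set.union_subset hAmax.1.2.2 ((Set.subset_sUnion_of_mem hM).trans Set.subset_union_right)⟩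
      obtain ⟨x, hxM, hxK⟩ := hmeet M hM
      exact ⟨x, hAmax.1.2.1 hxK, hxM⟩
    have := hAmax.2 hAM Set.subset_union_left
    exact hMA (fun z hz => this (Or.inr hz))
  have : A = K ∪ ⋃₀ 𝓕 := Set.Subset.antisymm hAmax.1.2.2 this
  exact this ▸ hAmax.1.1



/-- Concrete infimum of a set of decompositions. -/
def decompInf (hI : IsIntervalSystem I) (S : Set (Decomp I)) : Decomp I := by
  refine ⟨⟨fun x y => ∀ p ∈ S, p.1.r x y, ?_, ?_, ?_⟩, ?_⟩
  · exact fun x p hp => p.1.refl x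
  · exact fun h p hp => p.1.symm (h p hp)
  · exact fun h h' p hp => p.1.trans (h p hp) (h' p hp)
  · intro x
    have : {y | ∀ p ∈ S, p.1.r x y}
        = ⋂₀ (insert Set.univ {A | ∃ p ∈ S, A = {y | p.1.r x y}}) := by
      ext y
      simp only [Set.mem_sInter, Set.mem_insert_iff, Set.mem_setOf_eq]
      constructor
      · rintro h A (rfl | ⟨p, hp, rfl⟩)
        · trivial
        · exact h p hp
      · intro h p hp
        exact h _ (Or.inr ⟨p, hp, rfl⟩)
    show {y | ∀ p ∈ S, p.1.r x y} ∈ I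
    rw [this]
    refine hI.1.2 _ ?_ ⟨Set.univ, Set.mem_insert _ _⟩
    rintro A (rfl | ⟨p, hp, rfl⟩)
    · exact hI.1.1
    · exact p.2 x

lemma isGLB_decompInf (hI : IsIntervalSystem I) (S : Set (Decomp I)) :
    IsGLB S (decompInf hI S) := by
  constructor
  · intro p hp
    exact fun x y h => h p hp
  · intro q hq x y hxy p hp
    exact hq hp hxy

/-- Concrete supremum. -/
def decompSup (hI : IsIntervalSystem I) (S : Set (Decomp I)) : Decomp I :=
  decompInf hI (upperBounds S)

lemma isLUB_decompSup (hI : IsIntervalSystem I) (S : Set (Decomp I)) :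
    IsLUB S (decompSup hI S) := by
  have h := isGLB_decompInf hI (upperBounds S)
  constructor
  · intro p hp
    exact h.2 fun u hu => hu hp
  · intro q hq
    exact h.1 hq

/-- The bottom decomposition. -/
def decompBot (hI : IsIntervalSystem I) : Decomp I :=
  ⟨⊥, fun x => by
    have : {y | (⊥ : Setoid V).r x y} = {x} :=
      Set.ext fun y => ⟨fun h => Eq.symm h, fun h => Eq.symm h⟩
    rw [this]; exact hI.2.2.1.2 x⟩

lemma decompBot_le (hI : IsIntervalSystem I) (p : Decomp I) : decompBot hI ≤ p :=
  fun x y (h : x = y) => h ▸ p.1.refl x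

section WF

lemma wfGT (hfl : ∃ n : ℕ, ∀ c : LTSeries (Decomp I), c.length ≤ n) : WellFounded ((· > ·) : Decomp I → Decomp I → Prop) := by
  obtain ⟨n, hn⟩ := hfl
  rw [RelEmbedding.wellFounded_iff_isEmpty]
  constructor
  intro g
  have hg : ∀ k : ℕ, g.toFun k < g.toFun (k + 1) := by
    intro k
    exact g.map_rel_iff.mpr (Nat.lt_succ_self k)
  have : (⟨n + 1, fun i => g.toFun i.val, by
      intro i
      simpa using hg i.val⟩ : LTSeries (Decomp I)).length ≤ n := hn _
  simp at this

lemma wfLT (hfl : ∃ n : ℕ, ∀ c : LTSeries (Decomp I), c.length ≤ n) : WellFounded ((· < ·) : Decomp I → Decomp I → Prop) := by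
  obtain ⟨n, hn⟩ := hfl
  rw [RelEmbedding.wellFounded_iff_isEmpty]
  constructor
  intro g
  have hg : ∀ k : ℕ, g.toFun (k + 1) < g.toFun k := by
    intro k
    exact g.map_rel_iff.mpr (Nat.lt_succ_self k)
  have : (⟨n + 1, fun i => g.toFun (n + 1 - i.val), by
      intro i
      have hi : i.val ≤ n := Nat.lt_succ_iff.mp i.isLt
      have h1 : (i.castSucc : Fin (n + 2)).val = i.val := rfl
      have h2 : (i.succ : Fin (n + 2)).val = i.val + 1 := rfl
      simp only [h1, h2]
      have : n + 1 - i.val = (n - i.val) + 1 := by omega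
      rw [this]
      have : n + 1 - (i.val + 1) = n - i.val := by omega
      rw [this]
      exact hg _⟩ : LTSeries (Decomp I)).length ≤ n := hn _
  simp at this

lemma exists_maximal_above (hfl : ∃ n : ℕ, ∀ c : LTSeries (Decomp I), c.length ≤ n) (S : Set (Decomp I)) (x : Decomp I) (hx : x ∈ S) :
    ∃ y ∈ S, x ≤ y ∧ ∀ z ∈ S, ¬ y < z := by
  obtain ⟨y, hy, hymax⟩ := (wfGT hfl).has_min {z ∈ S | x ≤ z} ⟨x, hx, le_rfl⟩
  refine ⟨y, hy.1, hy.2, fun z hz hyz => ?_⟩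
  exact hymax z ⟨hz, hy.2.trans hyz.le⟩ hyz

lemma exists_minimal_below (hfl : ∃ n : ℕ, ∀ c : LTSeries (Decomp I), c.length ≤ n) (S : Set (Decomp I)) (x : Decomp I) (hx : x ∈ S) :
    ∃ y ∈ S, y ≤ x ∧ ∀ z ∈ S, ¬ z < y := by
  obtain ⟨y, hy, hymax⟩ := (wfLT hfl).has_min {z ∈ S | z ≤ x} ⟨x, hx, le_rfl⟩
  refine ⟨y, hy.1, hy.2, fun z hz hyz => ?_⟩
  exact hymax z ⟨hz, hyz.le.trans hy.2⟩ hyz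

end WF

/-- Splitting the block of `w` into singletons. -/
def splitBlock (hI : IsIntervalSystem I) (j : Decomp I) (w : V) : Decomp I := by
  refine ⟨⟨fun x y => j.1.r x y ∧ (x = y ∨ ¬ j.1.r w x), ?_, ?_, ?_⟩, ?_⟩
  · exact fun x => ⟨j.1.refl x, Or.inl rfl⟩
  · rintro x y ⟨hxy', hd⟩
    refine ⟨j.1.symm hxy', ?_⟩
    rcases hd with rfl | hd
    · exact Or.inl rfl
    · exact Or.inr fun hwy => hd (j.1.trans hwy (j.1.symm hxy'))
  · rintro x y z ⟨hxy', hd⟩ ⟨hyz', hd'⟩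
    refine ⟨j.1.trans hxy' hyz', ?_⟩
    rcases hd with rfl | hd
    · exact hd'
    · exact Or.inr hd
  · intro x
    show {y | j.1.r x y ∧ (x = y ∨ ¬ j.1.r w x)} ∈ I
    by_cases hx : j.1.r w x
    · have he : {y | j.1.r x y ∧ (x = y ∨ ¬ j.1.r w x)} = {x} := by
        ext y
        constructor
        · rintro ⟨h1, rfl | h2⟩
          · rfl
          · exact absurd hx h2
        · intro hy
          rw [Set.mem_singleton_iff] at hy
          subst hy
          exact ⟨j.1.refl _, Or.inl rfl⟩
      rw [he]
      exact hI.2.2.1.2 x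
    · have he : {y | j.1.r x y ∧ (x = y ∨ ¬ j.1.r w x)} = {y | j.1.r x y} := by
        ext y
        exact ⟨fun h => h.1, fun h => ⟨h, Or.inr hx⟩⟩
      rw [he]
      exact j.2 x

lemma splitBlock_r (hI : IsIntervalSystem I) (j : Decomp I) (w x y : V) :
    (splitBlock hI j w).1.r x y ↔ (j.1.r x y ∧ (x = y ∨ ¬ j.1.r w x)) := Iff.rfl

/-- A join-irreducible decomposition has exactly one non-singleton block. -/
lemma joinIrred_structure (hI : IsIntervalSystem I) (j : Decomp I) (hbot : j.1 ≠ ⊥)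
    (hirr : ∀ a b : Decomp I, IsLUB {a, b} j → j = a ∨ j = b) :
    ∃ x₀ y₀ : V, x₀ ≠ y₀ ∧ j.1.r x₀ x₀ ∧ j.1.r x₀ y₀ ∧
      (∀ x y, j.1.r x y ↔ x = y ∨ (j.1.r x₀ x ∧ j.1.r x₀ y)) := by
  have hex : ∃ x₀ y₀, j.1.r x₀ y₀ ∧ x₀ ≠ y₀ := by
    by_contra h
    push_neg at h
    apply hbot
    exact Setoid.ext fun a b => ⟨fun hab => h a b hab, fun hab => hab ▸ j.1.refl a⟩
  obtain ⟨x₀, y₀, hxy, hne⟩ := hex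
  have claim : ∀ u v, j.1.r u v → u ≠ v → j.1.r x₀ u := by
    by_contra h
    push_neg at h
    obtain ⟨u, v, huv, hune, hnot⟩ := h
    set a := splitBlock hI j x₀ with ha
    set b := splitBlock hI j u with hb
    have hlub : IsLUB {a, b} j := by
      constructor
      · rintro p (rfl | rfl)
        · exact fun x y h => ((splitBlock_r hI j x₀ x y).mp h).1
        · exact fun x y h => ((splitBlock_r hI j u x y).mp h).1
      · intro w hw
        have haw : a ≤ w := hw (Set.mem_insert _ _)
        have hbw : b ≤ w := hw (Set.mem_insert_of_mem _ rfl)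
        intro x y hxy'
        by_cases hx0 : j.1.r x₀ x
        · have hux : ¬ j.1.r u x := fun hux => hnot (j.1.trans hx0 (j.1.symm hux))
          exact hbw ((splitBlock_r hI j u x y).mpr ⟨hxy', Or.inr hux⟩)
        · exact haw ((splitBlock_r hI j x₀ x y).mpr ⟨hxy', Or.inr hx0⟩)
    rcases hirr a b hlub with heq | heq
    · have h2 : a.1.r x₀ y₀ := heq ▸ hxy
      rcases ((splitBlock_r hI j x₀ x₀ y₀).mp h2).2 with h | h
      · exact hne h
      · exact h (j.1.refl x₀)
    · have h2 : b.1.r u v := heq ▸ huv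
      rcases ((splitBlock_r hI j u u v).mp h2).2 with h | h
      · exact hune h
      · exact h (j.1.refl u)
  refine ⟨x₀, y₀, hne, j.1.refl x₀, hxy, fun x y => ?_⟩
  constructor
  · intro hxy'
    by_cases hxe : x = y
    · exact Or.inl hxe
    · exact Or.inr ⟨claim x y hxy' hxe, claim y x (j.1.symm hxy') (Ne.symm hxe)⟩
  · rintro (rfl | ⟨h1, h2⟩)
    · exact j.1.refl x
    · exact j.1.trans (j.1.symm h1) h2

end IntervalAux
/-- `D(V,I)` of finite length is balanced: for every join-irreducible `j` and
meet-irreducible `m` with `j ≰ m`, `j ∨ m = m*` iff `j ∧ m = j*`, where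
`j*` is the lower cover of `j` (the join of all elements below `j`) and `m*`
the upper cover of `m` (the meet of all elements above `m`). -/
theorem stmt17 (I : Set (Set V)) (hI : IsIntervalSystem I)
    (hfl : ∃ n : ℕ, ∀ c : LTSeries (Decomp I), c.length ≤ n)
    (j m : Decomp I)
    (hj : j.1 ≠ ⊥ ∧ ∀ a b : Decomp I, IsLUB {a, b} j → j = a ∨ j = b)
    (hm : m.1 ≠ ⊤ ∧ ∀ a b : Decomp I, IsGLB {a, b} m → m = a ∨ m = b)
    (hnle : ¬ j ≤ m)
    (jstar : Decomp I) (hjstar : IsLUB {y : Decomp I | y < j} jstar)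
    (mstar : Decomp I) (hmstar : IsGLB {y : Decomp I | m < y} mstar)
    (s t : Decomp I) (hs : IsLUB {j, m} s) (ht : IsGLB {j, m} t) :
    s = mstar ↔ t = jstar := by
  classical
  obtain ⟨x₀, y₀, hx0ne, hx0x0, hx0y0, jrel⟩ :=
    IntervalAux.joinIrred_structure hI j hj.1 hj.2
  set B : Set V := {y | j.1.r x₀ y} with hBdef
  have hBI : B ∈ I := j.2 x₀
  have hx₀B : x₀ ∈ B := hx0x0
  have hy₀B : y₀ ∈ B := hx0y0
  have jrelB : ∀ x y, j.1.r x y ↔ x = y ∨ (x ∈ B ∧ y ∈ B) := jrel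
  have hjBmem : ∀ {x y : V}, x ∈ B → y ∈ B → j.1.r x y :=
    fun hx hy => (jrelB _ _).mpr (Or.inr ⟨hx, hy⟩)
  -- concrete meet
  obtain ⟨tD, tDr, htDglb⟩ : ∃ tD : Decomp I,
      (∀ x y, tD.1.r x y ↔ (j.1.r x y ∧ m.1.r x y)) ∧ IsGLB {j, m} tD := by
    refine ⟨⟨⟨fun x y => j.1.r x y ∧ m.1.r x y,
      fun x => ⟨j.1.refl x, m.1.refl x⟩,
      fun h => ⟨j.1.symm h.1, m.1.symm h.2⟩,
      fun h h' => ⟨j.1.trans h.1 h'.1, m.1.trans h.2 h'.2⟩⟩, ?_⟩,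
      fun x y => Iff.rfl, ?_, ?_⟩
    · intro x
      show {y | j.1.r x y ∧ m.1.r x y} ∈ I
      have he : {y | j.1.r x y ∧ m.1.r x y} = {y | j.1.r x y} ∩ {y | m.1.r x y} := rfl
      rw [he]
      exact IntervalAux.inter_mem hI (j.2 x) (m.2 x)
    · rintro p (rfl | rfl)
      · exact fun x y h => h.1
      · exact fun x y h => h.2
    · intro q hq x y hxy
      exact ⟨hq (Set.mem_insert _ _) hxy, hq (Set.mem_insert_of_mem _ rfl) hxy⟩
  have hteqD : t = tD := ht.unique htDglb
  have trel : ∀ x y, t.1.r x y ↔ (j.1.r x y ∧ m.1.r x y) := by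
    rw [hteqD]; exact tDr
  -- the saturation N of B under m
  set N : Set V := {z | ∃ w, w ∈ B ∧ m.1.r z w} with hNdef
  have hBN : B ⊆ N := fun z hz => ⟨z, hz, m.1.refl z⟩
  have hNm : ∀ {z z' : V}, z ∈ N → m.1.r z z' → z' ∈ N := by
    rintro z z' ⟨w, hwB, hzw⟩ hzz'
    exact ⟨w, hwB, m.1.trans (m.1.symm hzz') hzw⟩
  have hNI : N ∈ I := by
    have he : N = B ∪ ⋃₀ {A | (∃ z, A = {y | m.1.r z y}) ∧ (A ∩ B).Nonempty} := by
      ext z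
      constructor
      · rintro ⟨w, hwB, hzw⟩
        refine Or.inr ⟨{y | m.1.r z y}, ⟨⟨z, rfl⟩, ⟨w, hzw, hwB⟩⟩, m.1.refl z⟩
      · rintro (hz | ⟨A, ⟨⟨z₁, rfl⟩, ⟨v, hv1, hv2⟩⟩, hzA⟩)
        · exact hBN hz
        · exact ⟨v, hv2, m.1.trans (m.1.symm hzA) hv1⟩
    rw [he]
    refine IntervalAux.union_mem hI hBI _ ?_ ?_
    · rintro A ⟨⟨z, rfl⟩, -⟩
      exact m.2 z
    · rintro A ⟨-, hne⟩
      exact hne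
  -- concrete join
  obtain ⟨sD, sDr, hsDlub⟩ : ∃ sD : Decomp I,
      (∀ x y, sD.1.r x y ↔ (m.1.r x y ∨ (x ∈ N ∧ y ∈ N))) ∧ IsLUB {j, m} sD := by
    refine ⟨⟨⟨fun x y => m.1.r x y ∨ (x ∈ N ∧ y ∈ N), ?_, ?_, ?_⟩, ?_⟩,
      fun x y => Iff.rfl, ?_, ?_⟩
    · exact fun x => Or.inl (m.1.refl x)
    · rintro x y (h | ⟨h1, h2⟩)
      · exact Or.inl (m.1.symm h)
      · exact Or.inr ⟨h2, h1⟩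
    · rintro x y z (h | ⟨h1, h2⟩) (h' | ⟨h1', h2'⟩)
      · exact Or.inl (m.1.trans h h')
      · exact Or.inr ⟨hNm h1' (m.1.symm h), h2'⟩
      · exact Or.inr ⟨h1, hNm h2 h'⟩
      · exact Or.inr ⟨h1, h2'⟩
    · intro x
      show {y | m.1.r x y ∨ (x ∈ N ∧ y ∈ N)} ∈ I
      by_cases hx : x ∈ N
      · have he : {y | m.1.r x y ∨ (x ∈ N ∧ y ∈ N)} = N := by
          ext y
          constructor
          · rintro (h | ⟨-, h2⟩)
            · exact hNm hx h
            · exact h2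
          · intro hy
            exact Or.inr ⟨hx, hy⟩
        rw [he]; exact hNI
      · have he : {y | m.1.r x y ∨ (x ∈ N ∧ y ∈ N)} = {y | m.1.r x y} := by
          ext y
          constructor
          · rintro (h | ⟨h1, -⟩)
            · exact h
            · exact absurd h1 hx
          · exact fun h => Or.inl h
        rw [he]; exact m.2 x
    · rintro p (rfl | rfl)
      · intro x y hxy
        rcases (jrelB x y).mp hxy with rfl | ⟨h1, h2⟩
        · exact Or.inl (m.1.refl x)
        · exact Or.inr ⟨hBN h1, hBN h2⟩
      · exact fun x y h => Or.inl h
    · intro u hu x y hxy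
      have huj : j ≤ u := hu (Set.mem_insert _ _)
      have hum : m ≤ u := hu (Set.mem_insert_of_mem _ rfl)
      rcases hxy with h | ⟨⟨w, hwB, hxw⟩, ⟨w', hw'B, hyw'⟩⟩
      · exact hum h
      · exact u.1.trans (hum hxw)
          (u.1.trans (huj (hjBmem hwB hw'B)) (hum (m.1.symm hyw')))
  have hseqD : s = sD := hs.unique hsDlub
  have srel : ∀ x y, s.1.r x y ↔ (m.1.r x y ∨ (x ∈ N ∧ y ∈ N)) := by
    rw [hseqD]; exact sDr
  -- abstract facts about jstar
  have hjstar_le : jstar ≤ j := hjstar.2 fun y hy => hy.le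
  have hlt_jstar : ∀ y : Decomp I, y < j → y ≤ jstar := fun y hy => hjstar.1 hy
  have htlej : t ≤ j := ht.1 (Set.mem_insert _ _)
  have htlem : t ≤ m := ht.1 (Set.mem_insert_of_mem _ rfl)
  have tltj : t < j := by
    refine lt_of_le_of_ne htlej fun h => hnle ?_
    rw [← h]; exact htlem
  have htjstar : t ≤ jstar := hlt_jstar t tltj
  have hjles : j ≤ s := hs.1 (Set.mem_insert _ _)
  have hmles : m ≤ s := hs.1 (Set.mem_insert_of_mem _ rfl)
  have msl : m < s := by
    refine lt_of_le_of_ne hmles fun h => hnle ?_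
    rw [h]
    exact hjles
  -- jstar is strictly below j
  have hjstar_ne : jstar ≠ j := by
    intro heq
    have hbotlt : IntervalAux.decompBot hI < j := by
      refine lt_of_le_of_ne (IntervalAux.decompBot_le hI j) fun h => hj.1 ?_
      have := congrArg Subtype.val h
      exact this ▸ rfl
    obtain ⟨a, haS, -, hamax⟩ :=
      IntervalAux.exists_maximal_above hfl {y | y < j} _ hbotlt
    have : ¬ ∀ y ∈ {y : Decomp I | y < j}, y ≤ a := by
      intro hub
      have : jstar ≤ a := hjstar.2 hub
      rw [heq] at this
      exact absurd (lt_of_le_of_lt this haS) (lt_irrefl j)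
    push_neg at this
    obtain ⟨b, hbS, hba⟩ := this
    obtain ⟨b', hb'S, hbb', -⟩ := IntervalAux.exists_maximal_above hfl {y | y < j} b hbS
    have hc := IntervalAux.isLUB_decompSup hI {a, b'}
    set c := IntervalAux.decompSup hI {a, b'} with hcdef
    have hcj : c ≤ j := by
      refine hc.2 ?_
      rintro p (rfl | rfl)
      · exact haS.le
      · exact hb'S.le
    rcases eq_or_lt_of_le hcj with hcj' | hcj'
    · rw [hcj'] at hc
      rcases hj.2 a b' hc with h | h
      · exact absurd haS (by rw [← h]; exact lt_irrefl j)
      · exact absurd hb'S (by rw [← h]; exact lt_irrefl j)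
    · have hac : a ≤ c := hc.1 (Set.mem_insert _ _)
      have : a = c := by
        rcases eq_or_lt_of_le hac with h | h
        · exact h
        · exact absurd h (hamax c hcj')
      have hb'c : b' ≤ a := this ▸ hc.1 (Set.mem_insert_of_mem _ rfl)
      exact hba (hbb'.trans hb'c)
  -- pairs in B related by t land in the same jstar block
  have hBjstar : ∀ {w w' : V}, w ∈ B → w' ∈ B → m.1.r w w' → jstar.1.r w w' :=
    fun hw hw' hm' => htjstar ((trel _ _).mpr ⟨hjBmem hw hw', hm'⟩)
  constructor
  · -- s = mstar → t = jstar
    intro hseq_star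
    have hjm : jstar ≤ m := by
      by_contra hjmn
      have hσlub := IntervalAux.isLUB_decompSup hI {m, jstar}
      set σ := IntervalAux.decompSup hI {m, jstar} with hσdef
      have hmσ : m ≤ σ := hσlub.1 (Set.mem_insert _ _)
      have hjsσ : jstar ≤ σ := hσlub.1 (Set.mem_insert_of_mem _ rfl)
      have hσs : σ ≤ s := by
        refine hσlub.2 ?_
        rintro p (rfl | rfl)
        · exact hmles
        · exact hjstar_le.trans hjles
      have hmneσ : m ≠ σ := by
        intro h
        rw [← h] at hjsσ
        exact hjmn hjsσ
      have hmstarσ : mstar ≤ σ := hmstar.1 (lt_of_le_of_ne hmσ hmneσ)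
      have hjσ : j ≤ σ := by
        rw [hseq_star] at hjles
        exact hjles.trans hmstarσ
      -- find two B-points in different jstar blocks
      obtain ⟨p, q, hpq, hpqstar⟩ : ∃ p q, j.1.r p q ∧ ¬ jstar.1.r p q := by
        by_contra h
        push_neg at h
        exact hjstar_ne (le_antisymm hjstar_le fun x y hxy => h x y hxy)
      have hpne : p ≠ q := fun h => hpqstar (h ▸ jstar.1.refl p)
      obtain ⟨hpB, hqB⟩ : p ∈ B ∧ q ∈ B := by
        rcases (jrelB p q).mp hpq with h | h
        · exact absurd h hpne
        · exact h
      -- jstar blocks within B ⊆ B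
      have hjstarB : ∀ {w y : V}, w ∈ B → jstar.1.r w y → y ∈ B := by
        intro w y hw hwy
        rcases (jrelB w y).mp (hjstar_le hwy) with rfl | h
        · exact hw
        · exact h.2
      -- the strong decomposition e
      obtain ⟨eD, eDr⟩ : ∃ eD : Decomp I, ∀ x y, eD.1.r x y ↔
          (m.1.r x y ∨ ∃ w w', w ∈ B ∧ w' ∈ B ∧ m.1.r x w ∧ m.1.r y w' ∧ jstar.1.r w w') := by
        refine ⟨⟨⟨fun x y => m.1.r x y ∨
          ∃ w w', w ∈ B ∧ w' ∈ B ∧ m.1.r x w ∧ m.1.r y w' ∧ jstar.1.r w w', ?_, ?_, ?_⟩, ?_⟩,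
          fun x y => Iff.rfl⟩
        · exact fun x => Or.inl (m.1.refl x)
        · rintro x y (h | ⟨w, w', hw, hw', h1, h2, h3⟩)
          · exact Or.inl (m.1.symm h)
          · exact Or.inr ⟨w', w, hw', hw, h2, h1, jstar.1.symm h3⟩
        · rintro x y z (h | ⟨w, w', hw, hw', h1, h2, h3⟩) (h' | ⟨v, v', hv, hv', h1', h2', h3'⟩)
          · exact Or.inl (m.1.trans h h')
          · exact Or.inr ⟨v, v', hv, hv', m.1.trans h h1', h2', h3'⟩
          · exact Or.inr ⟨w, w', hw, hw', h1, m.1.trans (m.1.symm h') h2, h3⟩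
          · refine Or.inr ⟨w, v', hw, hv', h1, h2', ?_⟩
            have hm2 : m.1.r w' v := m.1.trans (m.1.symm h2) h1'
            exact jstar.1.trans h3 (jstar.1.trans (hBjstar hw' hv hm2) h3')
        · intro x
          show {y | m.1.r x y ∨
            ∃ w w', w ∈ B ∧ w' ∈ B ∧ m.1.r x w ∧ m.1.r y w' ∧ jstar.1.r w w'} ∈ I
          by_cases hx : ∃ w, w ∈ B ∧ m.1.r x w
          · obtain ⟨w, hwB, hxw⟩ := hx
            have he : {y | m.1.r x y ∨
                ∃ w1 w1', w1 ∈ B ∧ w1' ∈ B ∧ m.1.r x w1 ∧ m.1.r y w1' ∧ jstar.1.r w1 w1'}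
                = {y | jstar.1.r w y} ∪
                  ⋃₀ {A | (∃ z, A = {y | m.1.r z y}) ∧ (A ∩ {y | jstar.1.r w y}).Nonempty} := by
              ext y
              constructor
              · rintro (h | ⟨w1, w1', hw1, hw1', h1, h2, h3⟩)
                · refine Or.inr ⟨{z | m.1.r y z}, ⟨⟨y, rfl⟩, ⟨w, ?_, ?_⟩⟩, m.1.refl y⟩
                  · exact m.1.trans (m.1.symm h) hxw
                  · exact jstar.1.refl w
                · refine Or.inr ⟨{z | m.1.r y z}, ⟨⟨y, rfl⟩, ⟨w1', h2, ?_⟩⟩, m.1.refl y⟩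
                  have : jstar.1.r w w1 := hBjstar hwB hw1 (m.1.trans (m.1.symm hxw) h1)
                  exact jstar.1.trans this h3
              · rintro (h | ⟨A, ⟨⟨z₁, rfl⟩, ⟨v, hv1, hv2⟩⟩, hyA⟩)
                · exact Or.inr ⟨w, y, hwB, hjstarB hwB h, hxw, m.1.refl y, h⟩
                · refine Or.inr ⟨w, v, hwB, hjstarB hwB hv2, hxw,
                    m.1.trans (m.1.symm hyA) hv1, hv2⟩
            rw [he]
            refine IntervalAux.union_mem hI (jstar.2 w) _ ?_ ?_
            · rintro A ⟨⟨z, rfl⟩, -⟩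
              exact m.2 z
            · rintro A ⟨-, hne⟩
              exact hne
          · have he : {y | m.1.r x y ∨
                ∃ w1 w1', w1 ∈ B ∧ w1' ∈ B ∧ m.1.r x w1 ∧ m.1.r y w1' ∧ jstar.1.r w1 w1'}
                = {y | m.1.r x y} := by
              ext y
              constructor
              · rintro (h | ⟨w1, w1', hw1, hw1', h1, -, -⟩)
                · exact h
                · exact absurd ⟨w1, hw1, h1⟩ hx
              · exact fun h => Or.inl h
            rw [he]; exact m.2 x
      have hσe : σ ≤ eD := by
        refine hσlub.2 ?_
        rintro p (rfl | rfl)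
        · exact fun x y h => (eDr x y).mpr (Or.inl h)
        · intro x y hxy
          refine (eDr x y).mpr ?_
          by_cases hxe : x = y
          · exact Or.inl (hxe ▸ m.1.refl x)
          · have hxB : x ∈ B ∧ y ∈ B := by
              rcases (jrelB x y).mp (hjstar_le hxy) with h | h
              · exact absurd h hxe
              · exact h
            exact Or.inr ⟨x, y, hxB.1, hxB.2, m.1.refl x, m.1.refl y, hxy⟩
      have hpqe : eD.1.r p q := hσe (hjσ hpq)
      rcases (eDr p q).mp hpqe with h | ⟨w, w', hw, hw', h1, h2, h3⟩
      · exact hpqstar (hBjstar hpB hqB h)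
      · have hjw : jstar.1.r p w := hBjstar hpB hw h1
        have hjw' : jstar.1.r q w' := hBjstar hqB hw' h2
        exact hpqstar (jstar.1.trans hjw (jstar.1.trans h3 (jstar.1.symm hjw')))
    have : jstar ≤ t := by
      refine ht.2 ?_
      rintro p (rfl | rfl)
      · exact hjstar_le
      · exact hjm
    exact le_antisymm htjstar this
  · -- t = jstar → s = mstar
    intro hteq
    have hlow : ∀ z : Decomp I, z < j → z ≤ t := by
      intro z hz
      rw [hteq]
      exact hlt_jstar z hz
    -- no decomposition strictly between m and s
    have hcov : ∀ σ : Decomp I, m < σ → ¬ σ < s := by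
      intro σ hmσ hσs
      have hσle : σ ≤ s := hσs.le
      have key : ∀ x, x ∈ N →
          (∀ b ∈ B, σ.1.r x b) ∨ (∀ y, σ.1.r x y → m.1.r x y) := by
        rintro x ⟨w, hwB, hxw⟩
        have hxN : x ∈ N := ⟨w, hwB, hxw⟩
        have hxwσ : σ.1.r x w := hmσ.le hxw
        obtain ⟨ρD, ρDr⟩ : ∃ ρD : Decomp I, ∀ a b, ρD.1.r a b ↔
            (a = b ∨ (σ.1.r x a ∧ a ∈ B ∧ σ.1.r x b ∧ b ∈ B) ∨
              (¬ σ.1.r x a ∧ ¬ σ.1.r x b ∧ t.1.r a b)) := by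
          refine ⟨⟨⟨fun a b => a = b ∨ (σ.1.r x a ∧ a ∈ B ∧ σ.1.r x b ∧ b ∈ B) ∨
            (¬ σ.1.r x a ∧ ¬ σ.1.r x b ∧ t.1.r a b), ?_, ?_, ?_⟩, ?_⟩, fun a b => Iff.rfl⟩
          · exact fun a => Or.inl rfl
          · rintro a b (rfl | ⟨h1, h2, h3, h4⟩ | ⟨h1, h2, h3⟩)
            · exact Or.inl rfl
            · exact Or.inr (Or.inl ⟨h3, h4, h1, h2⟩)
            · exact Or.inr (Or.inr ⟨h2, h1, t.1.symm h3⟩)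
          · rintro a b c (rfl | ⟨h1, h2, h3, h4⟩ | ⟨h1, h2, h3⟩)
              (h' | ⟨h1', h2', h3', h4'⟩ | ⟨h1', h2', h3'⟩)
            · exact Or.inl h'
            · exact Or.inr (Or.inl ⟨h1', h2', h3', h4'⟩)
            · exact Or.inr (Or.inr ⟨h1', h2', h3'⟩)
            · exact h' ▸ Or.inr (Or.inl ⟨h1, h2, h3, h4⟩)
            · exact Or.inr (Or.inl ⟨h1, h2, h3', h4'⟩)
            · exact absurd h3 h1'
            · exact h' ▸ Or.inr (Or.inr ⟨h1, h2, h3⟩)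
            · exact absurd h1' h2
            · exact Or.inr (Or.inr ⟨h1, h2', t.1.trans h3 h3'⟩)
          · intro a
            show {b | a = b ∨ (σ.1.r x a ∧ a ∈ B ∧ σ.1.r x b ∧ b ∈ B) ∨
              (¬ σ.1.r x a ∧ ¬ σ.1.r x b ∧ t.1.r a b)} ∈ I
            by_cases h1 : σ.1.r x a
            · by_cases h2 : a ∈ B
              · have he : {b | a = b ∨ (σ.1.r x a ∧ a ∈ B ∧ σ.1.r x b ∧ b ∈ B) ∨
                    (¬ σ.1.r x a ∧ ¬ σ.1.r x b ∧ t.1.r a b)}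
                    = {b | σ.1.r x b} ∩ B := by
                  ext b
                  constructor
                  · rintro (rfl | ⟨-, -, h3, h4⟩ | ⟨h3, -, -⟩)
                    · exact ⟨h1, h2⟩
                    · exact ⟨h3, h4⟩
                    · exact absurd h1 h3
                  · rintro ⟨h3, h4⟩
                    exact Or.inr (Or.inl ⟨h1, h2, h3, h4⟩)
                rw [he]
                exact IntervalAux.inter_mem hI (σ.2 x) hBI
              · have he : {b | a = b ∨ (σ.1.r x a ∧ a ∈ B ∧ σ.1.r x b ∧ b ∈ B) ∨
                    (¬ σ.1.r x a ∧ ¬ σ.1.r x b ∧ t.1.r a b)} = {a} := by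
                  ext b
                  constructor
                  · rintro (rfl | ⟨-, h3, -, -⟩ | ⟨h3, -, -⟩)
                    · rfl
                    · exact absurd h3 h2
                    · exact absurd h1 h3
                  · intro hb
                    rw [Set.mem_singleton_iff] at hb
                    exact Or.inl hb.symm
                rw [he]
                exact hI.2.2.1.2 a
            · have he : {b | a = b ∨ (σ.1.r x a ∧ a ∈ B ∧ σ.1.r x b ∧ b ∈ B) ∨
                  (¬ σ.1.r x a ∧ ¬ σ.1.r x b ∧ t.1.r a b)} = {b | t.1.r a b} := by
                ext b
                constructor
                · rintro (rfl | ⟨h3, -, -, -⟩ | ⟨-, -, h3⟩)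
                  · exact t.1.refl a
                  · exact absurd h3 h1
                  · exact h3
                · intro hb
                  refine Or.inr (Or.inr ⟨h1, ?_, hb⟩)
                  intro hxb
                  exact h1 (σ.1.trans hxb (hmσ.le (m.1.symm ((trel a b).mp hb).2)))
              rw [he]
              exact t.2 a
        have hρj : ρD ≤ j := by
          intro a b hab
          rcases (ρDr a b).mp hab with rfl | ⟨-, h2, -, h4⟩ | ⟨-, -, h3⟩
          · exact j.1.refl a
          · exact hjBmem h2 h4
          · exact htlej h3
        rcases eq_or_lt_of_le hρj with hρeq | hρlt
        · left
          intro b hbB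
          have hjwb : j.1.r w b := hjBmem hwB hbB
          have hρwb : ρD.1.r w b := by rw [hρeq]; exact hjwb
          rcases (ρDr w b).mp hρwb with rfl | ⟨-, -, h3, -⟩ | ⟨h3, -, -⟩
          · exact hxwσ
          · exact h3
          · exact absurd hxwσ h3
        · right
          have hρt : ρD ≤ t := hlow ρD hρlt
          have hmain : ∀ z, σ.1.r x z → m.1.r w z := by
            intro z hxz
            have hsxz : s.1.r x z := hσle hxz
            rcases (srel x z).mp hsxz with h | ⟨-, hzN⟩
            · exact m.1.trans (m.1.symm hxw) h
            · obtain ⟨w', hw'B, hzw'⟩ := hzN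
              have hzw'σ : σ.1.r z w' := hmσ.le hzw'
              have hxw'σ : σ.1.r x w' := σ.1.trans hxz hzw'σ
              have hρww' : ρD.1.r w w' :=
                (ρDr w w').mpr (Or.inr (Or.inl ⟨hxwσ, hwB, hxw'σ, hw'B⟩))
              have htww' : t.1.r w w' := hρt hρww'
              have hmww' : m.1.r w w' := ((trel w w').mp htww').2
              exact m.1.trans hmww' (m.1.symm hzw')
          intro y hxy
          have h1 : m.1.r w y := hmain y hxy
          have h2 : m.1.r w x := hmain x (σ.1.refl x)
          exact m.1.trans (m.1.symm h2) h1
      by_cases hex : ∃ x ∈ N, ∀ b ∈ B, σ.1.r x b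
      · obtain ⟨x, hxN, hxB⟩ := hex
        have hsσ : s ≤ σ := by
          intro z y hzy
          rcases (srel z y).mp hzy with h | ⟨hzN, hyN⟩
          · exact hmσ.le h
          · obtain ⟨w, hwB, hzw⟩ := hzN
            obtain ⟨w', hw'B, hyw'⟩ := hyN
            have h1 : σ.1.r z w := hmσ.le hzw
            have h2 : σ.1.r x w := hxB w hwB
            have h3 : σ.1.r x w' := hxB w' hw'B
            have h4 : σ.1.r y w' := hmσ.le hyw'
            exact σ.1.trans h1 (σ.1.trans (σ.1.symm h2) (σ.1.trans h3 (σ.1.symm h4)))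
        exact hσs.not_ge hsσ
      · have hσm : σ ≤ m := by
          intro x y hxy
          by_cases hxN : x ∈ N
          · rcases key x hxN with h | h
            · exact absurd ⟨x, hxN, h⟩ hex
            · exact h y hxy
          · rcases (srel x y).mp (hσle hxy) with h | ⟨h1, -⟩
            · exact h
            · exact absurd h1 hxN
        exact hmσ.not_ge hσm
    -- m < mstar
    have hmlemstar : m ≤ mstar := hmstar.2 fun y hy => hy.le
    have hmltstar : m < mstar := by
      refine lt_of_le_of_ne hmlemstar fun heq => ?_
      obtain ⟨z₁, hz₁S, -, hz₁min⟩ :=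
        IntervalAux.exists_minimal_below hfl {y | m < y} s msl
      have : ¬ ∀ y ∈ {y : Decomp I | m < y}, z₁ ≤ y := by
        intro hlb
        have : z₁ ≤ mstar := hmstar.2 hlb
        rw [← heq] at this
        exact absurd (lt_of_lt_of_le hz₁S this) (lt_irrefl m)
      push_neg at this
      obtain ⟨b, hbS, hz₁b⟩ := this
      obtain ⟨z₂, hz₂S, hz₂b, -⟩ :=
        IntervalAux.exists_minimal_below hfl {y | m < y} b hbS
      have hw := IntervalAux.isGLB_decompInf hI {z₁, z₂}
      set w := IntervalAux.decompInf hI {z₁, z₂} with hwdef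
      have hmw : m ≤ w := by
        refine hw.2 ?_
        rintro p (rfl | rfl)
        · exact hz₁S.le
        · exact hz₂S.le
      have hwz₁ : w ≤ z₁ := hw.1 (Set.mem_insert _ _)
      have hwz₂ : w ≤ z₂ := hw.1 (Set.mem_insert_of_mem _ rfl)
      have hwne : w ≠ z₁ := by
        intro h
        rw [h] at hwz₂
        exact hz₁b (hwz₂.trans hz₂b)
      have hmw' : m = w := by
        rcases eq_or_lt_of_le hmw with h | h
        · exact h
        · exact absurd (lt_of_le_of_ne hwz₁ hwne) (hz₁min w h)
      rw [← hmw'] at hw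
      rcases hm.2 z₁ z₂ hw with h | h
      · exact absurd hz₁S (by rw [← h]; exact lt_irrefl m)
      · exact absurd hz₂S (by rw [← h]; exact lt_irrefl m)
    have h1 : mstar ≤ s := hmstar.1 msl
    rcases eq_or_lt_of_le h1 with h | h
    · exact h.symm
    · exact absurd h (hcov mstar hmltstar)
end

section
/- A lattice L of finite length is balanced (for all join-irreducible j and meet-irreducible m with j ≰ m: j ∨ m = m* ⟺ j ∧ m = j*) if and only if both L and its dual L^(d) are strong lattices. -/
section
variable {L : Type*} [CompleteLattice L]

/-- Join-irreducible element of a lattice. -/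
def JoinIrred (j : L) : Prop := j ≠ ⊥ ∧ ∀ a b : L, j = a ⊔ b → j = a ∨ j = b

/-- Meet-irreducible element of a lattice. -/
def MeetIrred (m : L) : Prop := m ≠ ⊤ ∧ ∀ a b : L, m = a ⊓ b → m = a ∨ m = b

/-- `j* = ⋁{x | x < j}`. -/
def lowerStar (j : L) : L := sSup {x : L | x < j}

/-- `m* = ⋀{x | x > m}`. -/
def upperStar (m : L) : L := sInf {x : L | m < x}

/-- `L` is strong. -/
def StrongLat (L : Type*) [CompleteLattice L] : Prop :=
  ∀ j x : L, JoinIrred j → j ≤ lowerStar j ⊔ x → j ≤ x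

/-- The dual of `L` is strong. -/
def DualStrongLat (L : Type*) [CompleteLattice L] : Prop :=
  ∀ m x : L, MeetIrred m → upperStar m ⊓ x ≤ m → x ≤ m

/-- `L` is balanced. -/
def BalancedLat (L : Type*) [CompleteLattice L] : Prop :=
  ∀ j m : L, JoinIrred j → MeetIrred m → ¬ j ≤ m →
    (j ⊔ m = upperStar m ↔ j ⊓ m = lowerStar j)

end

section Aux
variable {L : Type*} [CompleteLattice L]

lemma lowerStar_le {j : L} : lowerStar j ≤ j := sSup_le fun _ hx => hx.le

lemma le_upperStar {m : L} : m ≤ upperStar m := le_sInf fun _ hx => hx.le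

lemma le_lowerStar_of_lt {x j : L} (h : x < j) : x ≤ lowerStar j := le_sSup h

lemma upperStar_le_of_lt {x m : L} (h : m < x) : upperStar m ≤ x := sInf_le h

/-- No strictly increasing ℕ-indexed chain in a finite-length lattice. -/
lemma no_strictMono (hfl : ∃ n : ℕ, ∀ c : LTSeries L, c.length ≤ n)
    (f : ℕ → L) (hf : StrictMono f) : False := by
  obtain ⟨n, hn⟩ := hfl
  have : StrictMono (fun i : Fin (n + 2) => f i) := fun a b h => hf (by exact_mod_cast h)
  have := hn (LTSeries.mk (n + 1) (fun i : Fin (n + 2) => f i) this)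
  simp [LTSeries.mk] at this

lemma exists_maximal (hfl : ∃ n : ℕ, ∀ c : LTSeries L, c.length ≤ n)
    {S : Set L} (hne : S.Nonempty) : ∃ m ∈ S, ∀ y, m < y → y ∉ S := by
  by_contra h
  push_neg at h
  have step : ∀ m ∈ S, ∃ y ∈ S, m < y := by
    intro m hm
    obtain ⟨y, hy1, hy2⟩ := h m hm
    exact ⟨y, hy2, hy1⟩
  obtain ⟨x0, hx0⟩ := hne
  choose g hg1 hg2 using step
  let f : ℕ → {x : L // x ∈ S} := fun n => Nat.rec ⟨x0, hx0⟩
    (fun _ p => ⟨g p.1 p.2, hg1 p.1 p.2⟩) n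
  have hmono : StrictMono (fun n => (f n).1) := by
    apply strictMono_nat_of_lt_succ
    intro n
    exact hg2 (f n).1 (f n).2
  exact no_strictMono hfl _ hmono

lemma no_strictAnti (hfl : ∃ n : ℕ, ∀ c : LTSeries L, c.length ≤ n)
    (f : ℕ → L) (hf : StrictAnti f) : False := by
  obtain ⟨n, hn⟩ := hfl
  have hm : StrictMono (fun i : Fin (n + 2) => f (n + 1 - i)) := by
    intro a b h
    apply hf
    have ha := a.2
    have hb := b.2
    have : (a : ℕ) < (b : ℕ) := h
    omega
  have := hn (LTSeries.mk (n + 1) _ hm)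
  simp [LTSeries.mk] at this

lemma exists_minimal (hfl : ∃ n : ℕ, ∀ c : LTSeries L, c.length ≤ n)
    {S : Set L} (hne : S.Nonempty) : ∃ m ∈ S, ∀ y, y < m → y ∉ S := by
  by_contra h
  push_neg at h
  have step : ∀ m ∈ S, ∃ y ∈ S, y < m := by
    intro m hm
    obtain ⟨y, hy1, hy2⟩ := h m hm
    exact ⟨y, hy2, hy1⟩
  obtain ⟨x0, hx0⟩ := hne
  choose g hg1 hg2 using step
  let f : ℕ → {x : L // x ∈ S} := fun n => Nat.rec ⟨x0, hx0⟩
    (fun _ p => ⟨g p.1 p.2, hg1 p.1 p.2⟩) n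
  have hanti : StrictAnti (fun n => (f n).1) := by
    apply strictAnti_nat_of_succ_lt
    intro n
    exact hg2 (f n).1 (f n).2
  exact no_strictAnti hfl _ hanti

/-- Key reduction: `j ⊔ m = m⁺ ↔ j ≤ m⁺` when `j ≰ m`. -/
lemma sup_eq_upperStar_iff {j m : L} (h : ¬ j ≤ m) :
    j ⊔ m = upperStar m ↔ j ≤ upperStar m := by
  constructor
  · intro he; rw [← he]; exact le_sup_left
  · intro hle
    have h1 : upperStar m ≤ j ⊔ m :=
      upperStar_le_of_lt (lt_of_le_of_ne le_sup_right (fun e => h (e ▸ le_sup_left)))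
    exact le_antisymm (sup_le hle le_upperStar) h1

lemma inf_eq_lowerStar_iff {j m : L} (h : ¬ j ≤ m) :
    j ⊓ m = lowerStar j ↔ lowerStar j ≤ m := by
  constructor
  · intro he; rw [← he]; exact inf_le_right
  · intro hle
    have h1 : j ⊓ m ≤ lowerStar j :=
      le_lowerStar_of_lt (lt_of_le_of_ne inf_le_left (fun e => h (e ▸ inf_le_right)))
    exact le_antisymm h1 (le_inf lowerStar_le hle)

end Aux

/-- A lattice of finite length is balanced iff both it and its dual are
strong. -/
theorem stmt18 {L : Type*} [CompleteLattice L]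
    (hfl : ∃ n : ℕ, ∀ c : LTSeries L, c.length ≤ n) :
    BalancedLat L ↔ StrongLat L ∧ DualStrongLat L := by
  constructor
  · intro hb
    constructor
    · -- Balanced → Strong
      intro j x hj hjx
      by_contra hnx
      -- maximal m ≥ x with j ≰ m
      obtain ⟨m, ⟨hxm, hjm⟩, hmax⟩ :=
        exists_maximal hfl (S := {y : L | x ≤ y ∧ ¬ j ≤ y}) ⟨x, le_refl x, hnx⟩
      have habove : ∀ y, m < y → j ≤ y := by
        intro y hy
        by_contra hny
        exact hmax y hy ⟨hxm.trans hy.le, hny⟩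
      have hm : MeetIrred m := by
        refine ⟨fun e => hjm (e ▸ le_top), fun a b he => ?_⟩
        by_contra hne
        push_neg at hne
        have ha : m < a := lt_of_le_of_ne (he ▸ inf_le_left) hne.1
        have hb' : m < b := lt_of_le_of_ne (he ▸ inf_le_right) hne.2
        exact hjm (he ▸ le_inf (habove a ha) (habove b hb'))
      have hjstar : j ≤ upperStar m := le_sInf fun y hy => habove y hy
      have := (hb j m hj hm hjm).mp ((sup_eq_upperStar_iff hjm).mpr hjstar)
      have hls : lowerStar j ≤ m := (inf_eq_lowerStar_iff hjm).mp this
      exact hjm (hjx.trans (sup_le hls hxm))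
    · -- Balanced → DualStrong
      intro m x hm hmx
      by_contra hnx
      obtain ⟨j, ⟨hjx, hjm⟩, hmin⟩ :=
        exists_minimal hfl (S := {y : L | y ≤ x ∧ ¬ y ≤ m}) ⟨x, le_refl x, hnx⟩
      have hbelow : ∀ y, y < j → y ≤ m := by
        intro y hy
        by_contra hny
        exact hmin y hy ⟨hy.le.trans hjx, hny⟩
      have hj : JoinIrred j := by
        refine ⟨fun e => hjm (e ▸ bot_le), fun a b he => ?_⟩
        by_contra hne
        push_neg at hne
        have ha : a < j := lt_of_le_of_ne (he ▸ le_sup_left) (fun e => hne.1 e.symm)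
        have hb' : b < j := lt_of_le_of_ne (he ▸ le_sup_right) (fun e => hne.2 e.symm)
        exact hjm (he ▸ sup_le (hbelow a ha) (hbelow b hb'))
      have hlstar : lowerStar j ≤ m := sSup_le fun y hy => hbelow y hy
      have := (hb j m hj hm hjm).mpr ((inf_eq_lowerStar_iff hjm).mpr hlstar)
      have hus : j ≤ upperStar m := (sup_eq_upperStar_iff hjm).mp this
      exact hjm ((le_inf hus hjx).trans hmx)
  · rintro ⟨hs, hd⟩ j m hj hm hjm
    rw [sup_eq_upperStar_iff hjm, inf_eq_lowerStar_iff hjm]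
    constructor
    · -- j ≤ m⁺ → j₊ ≤ m, via strong
      intro hjus
      by_contra hls
      have h1 : m < lowerStar j ⊔ m :=
        lt_of_le_of_ne le_sup_right (fun e => hls (e ▸ le_sup_left))
      have h2 : upperStar m ≤ lowerStar j ⊔ m := upperStar_le_of_lt h1
      exact hjm (hs j m hj (hjus.trans h2))
    · -- j₊ ≤ m → j ≤ m⁺, via dual strong
      intro hls
      by_contra hjus
      have h1 : upperStar m ⊓ j < j :=
        lt_of_le_of_ne inf_le_right (fun e => hjus (e ▸ inf_le_left))
      have h2 : upperStar m ⊓ j ≤ lowerStar j := le_lowerStar_of_lt h1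
      exact hjm (hd m j hm (h2.trans hls))
end
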